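/- For the incidence matrix D of a tree on n vertices, D D^+ = I - (1/n) 1 1^T, the orthogonal projection onto the complement of the all-ones vector. -/

import Mathlib

open Matrix

/-- Signed incidence matrix of an oriented graph with `n` vertices and `m` edges. -/
def incMat (n m : ℕ) (tail head : Fin m → Fin n) : Matrix (Fin n) (Fin m) ℝ :=
  Matrix.of fun i j => (if tail j = i then (1 : ℝ) else 0) - (if head j = i then (1 : ℝ) else 0)

/-- Source vertex of an oriented step (edge together with a traversal direction). -/
def stepSrc {n m : ℕ} (tail head : Fin m → Fin n) (p : Fin m × Bool) : Fin n :=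
  if p.2 then tail p.1 else head p.1

/-- Destination vertex of an oriented step. -/
def stepDst {n m : ℕ} (tail head : Fin m → Fin n) (p : Fin m × Bool) : Fin n :=
  if p.2 then head p.1 else tail p.1

/-- `IsOPath tail head steps s t` : the list of directed steps forms a walk from `s` to `t`. -/
def IsOPath {n m : ℕ} (tail head : Fin m → Fin n) :
    List (Fin m × Bool) → Fin n → Fin n → Prop
  | [], s, t => s = t
  | p :: rest, s, t => stepSrc tail head p = s ∧ IsOPath tail head rest (stepDst tail head p) t

/-- Signed incidence vector of a path given by its list of directed steps. -/
def pathVec {m : ℕ} (steps : List (Fin m × Bool)) (j : Fin m) : ℝ :=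
  (steps.map (fun p => if p.1 = j then (if p.2 then (1 : ℝ) else -1) else 0)).sum

/-- The four Penrose conditions characterizing the Moore–Penrose pseudo-inverse. -/
def IsMoorePenrose {n m : ℕ} (A : Matrix (Fin n) (Fin m) ℝ) (B : Matrix (Fin m) (Fin n) ℝ) : Prop :=
  A * B * A = A ∧ B * A * B = B ∧ (A * B)ᵀ = A * B ∧ (B * A)ᵀ = B * A

/-- The oriented graph is simple: no self-loops and no multi-edges. -/
def SimpleOriented {n m : ℕ} (tail head : Fin m → Fin n) : Prop :=
  (∀ j, tail j ≠ head j) ∧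
  ∀ j k, j ≠ k →
    ¬((tail j = tail k ∧ head j = head k) ∨ (tail j = head k ∧ head j = tail k))

/-- The graph is connected: any two vertices are joined by a path. -/
def OConnected {n m : ℕ} (tail head : Fin m → Fin n) : Prop :=
  ∀ u v : Fin n, ∃ steps, IsOPath tail head steps u v

/-- The graph is acyclic: no nonempty closed walk with pairwise distinct edges. -/
def OAcyclic {n m : ℕ} (tail head : Fin m → Fin n) : Prop :=
  ∀ (v : Fin n) (steps : List (Fin m × Bool)), steps ≠ [] →
    (steps.map Prod.fst).Nodup → ¬ IsOPath tail head steps v v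


section Aux

variable {N M : ℕ} (tail head : Fin M → Fin N)

/-- Endpoint indicator sum of a list of steps. -/
def pathEnds (steps : List (Fin M × Bool)) (i : Fin N) : ℝ :=
  (steps.map (fun p => (if stepSrc tail head p = i then (1 : ℝ) else 0)
    - (if stepDst tail head p = i then (1 : ℝ) else 0))).sum

lemma mulVec_pathVec (steps : List (Fin M × Bool)) :
    incMat N M tail head *ᵥ pathVec steps = pathEnds tail head steps := by
  induction steps with
  | nil =>
      have h0 : pathVec ([] : List (Fin M × Bool)) = (0 : Fin M → ℝ) := by
        funext j; simp [pathVec]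
      funext i
      simp [h0, Matrix.mulVec_zero, pathEnds]
  | cons p l ih =>
      have hsplit : pathVec (p :: l) =
          (fun j => if p.1 = j then (if p.2 then (1:ℝ) else -1) else 0) + pathVec l := by
        funext j; simp [pathVec]
      rw [hsplit, Matrix.mulVec_add, ih]
      funext i
      have hs : (incMat N M tail head *ᵥ
          (fun j => if p.1 = j then (if p.2 then (1:ℝ) else -1) else 0)) i
          = incMat N M tail head i p.1 * (if p.2 then (1:ℝ) else -1) := by
        simp [Matrix.mulVec, dotProduct, mul_ite, mul_zero, Finset.sum_ite_eq]
      have hpe : pathEnds tail head (p :: l) i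
          = ((if stepSrc tail head p = i then (1:ℝ) else 0)
             - (if stepDst tail head p = i then (1:ℝ) else 0)) + pathEnds tail head l i := by
        simp [pathEnds]
      rw [Pi.add_apply, hs, hpe]
      obtain ⟨j, b⟩ := p
      cases b <;> simp [incMat, stepSrc, stepDst] <;> ring

lemma pathEnds_of_isOPath (steps : List (Fin M × Bool)) :
    ∀ u v : Fin N, IsOPath tail head steps u v →
    pathEnds tail head steps =
      fun i => (if u = i then (1:ℝ) else 0) - (if v = i then (1:ℝ) else 0) := by
  induction steps with
  | nil =>
      intro u v h
      have : u = v := h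
      subst this
      funext i; simp [pathEnds]
  | cons p l ih =>
      intro u v h
      obtain ⟨hsrc, hrest⟩ := h
      funext i
      have := congrFun (ih (stepDst tail head p) v hrest) i
      simp only [pathEnds, List.map_cons, List.sum_cons] at *
      rw [this, hsrc]
      ring

end Aux

/-- for the incidence matrix `D` of a tree on `n+1` vertices,
`D D⁺ = I - (1/(n+1)) 𝟙 𝟙ᵀ`, the orthogonal projection onto the complement of
the all-ones vector. -/
theorem stmt6 (n : ℕ) (tail head : Fin n → Fin (n + 1))
    (hsimple : SimpleOriented tail head)
    (hconn : OConnected tail head) (hacyc : OAcyclic tail head)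
    (B : Matrix (Fin n) (Fin (n + 1)) ℝ)
    (hB : IsMoorePenrose (incMat (n + 1) n tail head) B) :
    incMat (n + 1) n tail head * B =
      (1 : Matrix (Fin (n + 1)) (Fin (n + 1)) ℝ) -
        ((n + 1 : ℝ))⁻¹ • Matrix.of (fun _ _ => (1 : ℝ)) := by
  classical
  obtain ⟨h1, h2, h3, h4⟩ := hB
  set D := incMat (n + 1) n tail head with hD
  set Mx := D * B with hM
  -- M fixes indicator differences
  have hfix : ∀ u v : Fin (n + 1),
      Mx *ᵥ (fun i => (if u = i then (1:ℝ) else 0) - (if v = i then (1:ℝ) else 0))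
      = fun i => (if u = i then (1:ℝ) else 0) - (if v = i then (1:ℝ) else 0) := by
    intro u v
    obtain ⟨steps, hs⟩ := hconn u v
    have hpv := mulVec_pathVec tail head steps
    have hpe := pathEnds_of_isOPath tail head steps u v hs
    calc Mx *ᵥ (fun i => (if u = i then (1:ℝ) else 0) - (if v = i then (1:ℝ) else 0))
        = Mx *ᵥ (D *ᵥ pathVec steps) := by rw [hpv, hpe]
      _ = (Mx * D) *ᵥ pathVec steps := by rw [Matrix.mulVec_mulVec]
      _ = D *ᵥ pathVec steps := by rw [hM, h1]
      _ = _ := by rw [hpv, hpe]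
  -- M kills the all-ones vector
  have honeD : (fun _ => (1:ℝ)) ᵥ* D = 0 := by
    funext j
    simp [Matrix.vecMul, dotProduct, hD, incMat, Finset.sum_sub_distrib,
      Finset.sum_ite_eq, Finset.sum_ite_eq']
  have hone : Mx *ᵥ (fun _ => (1:ℝ)) = 0 := by
    have : Mx = Mxᵀ := h3.symm
    rw [this, Matrix.mulVec_transpose]
    rw [hM, ← Matrix.vecMul_vecMul, honeD, Matrix.zero_vecMul]
  -- column computation
  have hcol : ∀ u : Fin (n + 1),
      Mx *ᵥ (fun k => if u = k then (1:ℝ) else 0)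
      = fun i => (if u = i then (1:ℝ) else 0) - ((n + 1 : ℝ))⁻¹ := by
    intro u
    have hdecomp : (fun k => if u = k then (1:ℝ) else 0)
        = ((n + 1 : ℝ))⁻¹ • ((fun _ => (1:ℝ)) +
            ∑ v : Fin (n + 1), fun k => (if u = k then (1:ℝ) else 0) - (if v = k then (1:ℝ) else 0)) := by
      funext k
      have hsum : (∑ v : Fin (n + 1), fun k => (if u = k then (1:ℝ) else 0) - (if v = k then (1:ℝ) else 0)) k
          = (n + 1 : ℝ) * (if u = k then (1:ℝ) else 0) - 1 := by
        rw [Finset.sum_apply]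
        simp [Finset.sum_sub_distrib, Finset.sum_ite_eq, Finset.card_univ, mul_comm]
      rw [Pi.smul_apply, Pi.add_apply, hsum]
      have hne : (n + 1 : ℝ) ≠ 0 := by positivity
      rw [smul_eq_mul, add_sub_cancel, inv_mul_cancel_left₀ hne]
    rw [hdecomp, Matrix.mulVec_smul, Matrix.mulVec_add]
    rw [hone]
    have hsum2 : Mx *ᵥ (∑ v : Fin (n + 1), fun k => (if u = k then (1:ℝ) else 0) - (if v = k then (1:ℝ) else 0))
        = ∑ v : Fin (n + 1), fun i => (if u = i then (1:ℝ) else 0) - (if v = i then (1:ℝ) else 0) := by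
      rw [← Matrix.mulVecLin_apply, map_sum]
      exact Finset.sum_congr rfl fun v _ => by rw [Matrix.mulVecLin_apply, hfix]
    rw [hsum2]
    funext i
    rw [Pi.smul_apply, Pi.add_apply, Finset.sum_apply]
    have hsum3 : (∑ v : Fin (n + 1), ((if u = i then (1:ℝ) else 0) - (if v = i then (1:ℝ) else 0)))
        = (n + 1 : ℝ) * (if u = i then (1:ℝ) else 0) - 1 := by
      simp [Finset.sum_sub_distrib, Finset.sum_ite_eq, Finset.card_univ, mul_comm]
    rw [Pi.zero_apply, zero_add, hsum3]
    have hne : (n + 1 : ℝ) ≠ 0 := by positivity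
    rw [smul_eq_mul, mul_sub, inv_mul_cancel_left₀ hne, mul_one]
  ext i u
  have h := congrFun (hcol u) i
  have hlhs : (Mx *ᵥ (fun k => if u = k then (1:ℝ) else 0)) i = Mx i u := by
    simp [Matrix.mulVec, dotProduct, mul_ite, mul_one, mul_zero, Finset.sum_ite_eq]
  rw [hlhs] at h
  rw [h]
  simp [Matrix.one_apply, eq_comm]
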